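/- Let Σ̂, Γ ∈ ℝ^{m×m} and fix indices u, v ∈ {1,…,m}. For x ∈ ℝ let Γ(x) be the matrix equal to Γ except that its (u,v) entry is x. Then the function x ↦ tr(Γ(x) Γ(x)ᵀ Σ̂) is differentiable with derivative at x equal to 2 Σ̂_{uu} x + A_{uv}, where A_{uv} := Σ_{j≠u} Γ_{jv} Σ̂_{ju} + Σ_{k≠u} Γ_{kv} Σ̂_{uk}. -/

import Mathlib

open Matrix in
/-- The derivative of `x ↦ tr(Γ(x) Γ(x)ᵀ Σ̂)` at `x`, where `Γ(x)` agrees with `Γ`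
except that its `(u,v)` entry is `x`, equals `2 Σ̂ᵤᵤ x + A_{uv}` with
`A_{uv} = ∑_{j≠u} Γ_{jv} Σ̂_{ju} + ∑_{k≠u} Γ_{kv} Σ̂_{uk}`. -/
theorem stmt_2 {m : ℕ} (Sig Γ : Matrix (Fin m) (Fin m) ℝ) (u v : Fin m) (x : ℝ) :
    HasDerivAt
      (fun y : ℝ =>
        Matrix.trace ((Matrix.of fun i j => if i = u ∧ j = v then y else Γ i j) *
          (Matrix.of fun i j => if i = u ∧ j = v then y else Γ i j)ᵀ * Sig))
      (2 * Sig u u * x +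
        ((∑ j ∈ Finset.univ.filter (· ≠ u), Γ j v * Sig j u) +
          ∑ k ∈ Finset.univ.filter (· ≠ u), Γ k v * Sig u k)) x := by
  set E : Matrix (Fin m) (Fin m) ℝ := Matrix.single u v 1 with hE
  set Γ₀ : Matrix (Fin m) (Fin m) ℝ :=
    Matrix.of fun i j => if i = u ∧ j = v then 0 else Γ i j with hΓ₀
  have hA : ∀ y : ℝ,
      (Matrix.of fun i j => if i = u ∧ j = v then y else Γ i j) = Γ₀ + y • E := by
    intro y
    ext i j
    by_cases h : i = u ∧ j = v
    · obtain ⟨hi, hj⟩ := h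
      subst hi; subst hj
      simp [hΓ₀, hE, Matrix.single]
    · have h1 : ¬(i = u ∧ j = v) := h
      simp [hΓ₀, hE, Matrix.single, Matrix.add_apply, h1]
      intro hi hj
      exact absurd ⟨hi.symm, hj.symm⟩ h1
  have hF : ∀ y : ℝ,
      Matrix.trace ((Matrix.of fun i j => if i = u ∧ j = v then y else Γ i j) *
          (Matrix.of fun i j => if i = u ∧ j = v then y else Γ i j)ᵀ * Sig)
      = Matrix.trace (Γ₀ * Γ₀ᵀ * Sig)
        + (Matrix.trace (Γ₀ * Eᵀ * Sig) + Matrix.trace (E * Γ₀ᵀ * Sig)) * y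
        + Matrix.trace (E * Eᵀ * Sig) * (y * y) := by
    intro y
    rw [hA y]
    simp only [Matrix.transpose_add, Matrix.transpose_smul, Matrix.add_mul,
      Matrix.mul_add, Matrix.smul_mul, Matrix.mul_smul, Matrix.trace_add,
      Matrix.trace_smul, smul_smul, smul_eq_mul]
    ring
  have hD : HasDerivAt
      (fun y : ℝ => Matrix.trace (Γ₀ * Γ₀ᵀ * Sig)
        + (Matrix.trace (Γ₀ * Eᵀ * Sig) + Matrix.trace (E * Γ₀ᵀ * Sig)) * y
        + Matrix.trace (E * Eᵀ * Sig) * (y * y))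
      ((Matrix.trace (Γ₀ * Eᵀ * Sig) + Matrix.trace (E * Γ₀ᵀ * Sig))
        + Matrix.trace (E * Eᵀ * Sig) * (2 * x)) x := by
    have h1 : HasDerivAt (fun y : ℝ => y * y) (2 * x) x := by
      exact ((hasDerivAt_id' x).mul (hasDerivAt_id' x)).congr_deriv (by ring)
    have h2 := ((hasDerivAt_const x (Matrix.trace (Γ₀ * Γ₀ᵀ * Sig))).add
      ((hasDerivAt_id x).const_mul
        (Matrix.trace (Γ₀ * Eᵀ * Sig) + Matrix.trace (E * Γ₀ᵀ * Sig)))).add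
      (h1.const_mul (Matrix.trace (E * Eᵀ * Sig)))
    exact h2.congr_deriv (by ring)
  have key : HasDerivAt
      (fun y : ℝ =>
        Matrix.trace ((Matrix.of fun i j => if i = u ∧ j = v then y else Γ i j) *
          (Matrix.of fun i j => if i = u ∧ j = v then y else Γ i j)ᵀ * Sig))
      ((Matrix.trace (Γ₀ * Eᵀ * Sig) + Matrix.trace (E * Γ₀ᵀ * Sig))
        + Matrix.trace (E * Eᵀ * Sig) * (2 * x)) x := by
    exact hD.congr_of_eventuallyEq (Filter.Eventually.of_forall fun y => (hF y))
  have t1 : Matrix.trace (E * Eᵀ * Sig) = Sig u u := by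
    simp [hE, Matrix.trace, Matrix.mul_apply, Matrix.single, Finset.sum_ite_eq,
      ite_and, Matrix.transpose_apply]
  have t2 : Matrix.trace (E * Γ₀ᵀ * Sig)
      = ∑ k ∈ Finset.univ.filter (· ≠ u), Γ k v * Sig k u := by
    rw [Finset.sum_filter]
    simp only [hE, hΓ₀, Matrix.trace, Matrix.mul_apply, Matrix.single,
      Matrix.diag_apply, Matrix.transpose_apply, Matrix.of_apply, ite_and, ite_mul,
      zero_mul, one_mul, Finset.sum_ite_eq, Finset.mem_univ, if_true,
      Finset.sum_ite_eq', mul_ite, mul_zero]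
    rw [Finset.sum_eq_single u (fun b _ hb => by simp [Ne.symm hb]) (by simp)]
    apply Finset.sum_congr rfl
    intro k _
    by_cases hk : k = u
    · have hz : (∑ j : Fin m, if j = v then (0:ℝ) else if v = j then Γ u j else 0) = 0 :=
        Finset.sum_eq_zero fun j _ => by
          by_cases hj : j = v
          · simp [hj]
          · rw [if_neg hj, if_neg fun h => hj h.symm]
      simp [hk, hz]
    · simp [hk, Finset.sum_ite_eq]
  have t3 : Matrix.trace (Γ₀ * Eᵀ * Sig)
      = ∑ k ∈ Finset.univ.filter (· ≠ u), Γ k v * Sig u k := by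
    rw [Finset.sum_filter]
    simp [hE, hΓ₀, Matrix.trace, Matrix.mul_apply, Matrix.single, ite_and,
      Finset.sum_ite_eq, Matrix.transpose_apply, mul_ite, ite_mul, apply_ite]
  rw [t1, t2, t3] at key
  convert key using 1
  ring
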